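/- Let R(X,Y): Γ(H) → Γ(H) be curvature operators satisfying the Bianchi-type identity R(X,Y)Z + R(Z,X)Y + R(Y,Z)X = dη(X,Y)τ(Z) + dη(Z,X)τ(Y) + dη(Y,Z)τ(X) on a 4-dimensional H with orthonormal basis e₁,...,e₄ and dη = e¹∧e² + e³∧e⁴, where τ is self-adjoint, trace-free, and anticommutes with J. Then the correction term B(X,Y) = (i/2)Σ_{α=1}^4 g(B_α(X,Y), Je_α) vanishes, where B_α(X,Y) = dη(X,Y)τ(e_α) + dη(e_α,X)τ(Y) + dη(Y,e_α)τ(X). -/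
import Mathlib


open RealInnerProductSpace

/-- The standard basis of `H = ℝ⁴`. -/
noncomputable def e (α : Fin 4) : EuclideanSpace ℝ (Fin 4) :=
  EuclideanSpace.single α (1 : ℝ)

lemma inner_e_right (x : EuclideanSpace ℝ (Fin 4)) (i : Fin 4) : ⟪x, e i⟫ = x i := by
  simp [e, EuclideanSpace.inner_single_right]

lemma inner_e_left (x : EuclideanSpace ℝ (Fin 4)) (i : Fin 4) : ⟪e i, x⟫ = x i := by
  simp [e, EuclideanSpace.inner_single_left]

lemma e_apply (i j : Fin 4) : e i j = if j = i then 1 else 0 := by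
  simp [e, EuclideanSpace.single_apply]

lemma decomp (x : EuclideanSpace ℝ (Fin 4)) :
    x = x 0 • e 0 + x 1 • e 1 + x 2 • e 2 + x 3 • e 3 := by
  ext i
  fin_cases i <;> simp [e, EuclideanSpace.single_apply]


/-- on `H = ℝ⁴` with `Je₁ = e₂, Je₂ = -e₁, Je₃ = e₄, Je₄ = -e₃`,
`dη(X,Y) = g(JX,Y)`, `τ` self-adjoint, trace-free and anticommuting with `J`, and
curvature operators `R(X,Y)` satisfying the Bianchi-type identity
`R(X,Y)Z + R(Z,X)Y + R(Y,Z)X = dη(X,Y)τZ + dη(Z,X)τY + dη(Y,Z)τX`, the correction term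
`B(X,Y) = (i/2) Σ_α g(B_α(X,Y), Je_α)` vanishes, where
`B_α(X,Y) = dη(X,Y)τ(e_α) + dη(e_α,X)τ(Y) + dη(Y,e_α)τ(X)`. -/
theorem stmt17
    (J τ : EuclideanSpace ℝ (Fin 4) →ₗ[ℝ] EuclideanSpace ℝ (Fin 4))
    (hJ0 : J (e 0) = e 1) (hJ1 : J (e 1) = -e 0)
    (hJ2 : J (e 2) = e 3) (hJ3 : J (e 3) = -e 2)
    (hτsa : ∀ X Y, ⟪τ X, Y⟫ = ⟪X, τ Y⟫)
    (hτtr : LinearMap.trace ℝ (EuclideanSpace ℝ (Fin 4)) τ = 0)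
    (hanti : ∀ X, τ (J X) = -J (τ X))
    (R : EuclideanSpace ℝ (Fin 4) →ₗ[ℝ] EuclideanSpace ℝ (Fin 4) →ₗ[ℝ]
          (EuclideanSpace ℝ (Fin 4) →ₗ[ℝ] EuclideanSpace ℝ (Fin 4)))
    (hBianchi : ∀ X Y Z, R X Y Z + R Z X Y + R Y Z X =
        ⟪J X, Y⟫ • τ Z + ⟪J Z, X⟫ • τ Y + ⟪J Y, Z⟫ • τ X) :
    ∀ X Y, (Complex.I / 2) *
        ((∑ α : Fin 4,
          ⟪⟪J X, Y⟫ • τ (e α) + ⟪J (e α), X⟫ • τ Y + ⟪J Y, e α⟫ • τ X, J (e α)⟫ : ℝ) : ℂ)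
      = 0 := by
  intro X Y
  have hsym : ∀ i j : Fin 4, τ (e i) j = τ (e j) i := by
    intro i j
    have := hτsa (e i) (e j)
    rw [inner_e_right, inner_e_left] at this
    exact this
  have hJX : J X = X 0 • e 1 - X 1 • e 0 + X 2 • e 3 - X 3 • e 2 := by
    conv_lhs => rw [decomp X]
    simp only [map_add, map_smul, hJ0, hJ1, hJ2, hJ3, smul_neg]
    module
  have hJY : J Y = Y 0 • e 1 - Y 1 • e 0 + Y 2 • e 3 - Y 3 • e 2 := by
    conv_lhs => rw [decomp Y]
    simp only [map_add, map_smul, hJ0, hJ1, hJ2, hJ3, smul_neg]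
    module
  have hτX : τ X = X 0 • τ (e 0) + X 1 • τ (e 1) + X 2 • τ (e 2) + X 3 • τ (e 3) := by
    conv_lhs => rw [decomp X]
    simp only [map_add, map_smul]
  have hτY : τ Y = Y 0 • τ (e 0) + Y 1 • τ (e 1) + Y 2 • τ (e 2) + Y 3 • τ (e 3) := by
    conv_lhs => rw [decomp Y]
    simp only [map_add, map_smul]
  have key : (∑ α : Fin 4,
      ⟪⟪J X, Y⟫ • τ (e α) + ⟪J (e α), X⟫ • τ Y + ⟪J Y, e α⟫ • τ X, J (e α)⟫ : ℝ) = 0 := by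
    rw [Fin.sum_univ_four, hJ0, hJ1, hJ2, hJ3, hJX, hJY, hτX, hτY]
    simp only [inner_add_left, inner_add_right, inner_sub_left, inner_sub_right,
      inner_neg_left, inner_neg_right, real_inner_smul_left, real_inner_smul_right,
      inner_e_right, inner_e_left]
    simp only [e_apply]
    have h01 : ((0:Fin 4) = 1) = False := by decide
    have h02 : ((0:Fin 4) = 2) = False := by decide
    have h03 : ((0:Fin 4) = 3) = False := by decide
    have h10 : ((1:Fin 4) = 0) = False := by decide
    have h12 : ((1:Fin 4) = 2) = False := by decide
    have h13 : ((1:Fin 4) = 3) = False := by decide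
    have h20 : ((2:Fin 4) = 0) = False := by decide
    have h21 : ((2:Fin 4) = 1) = False := by decide
    have h23 : ((2:Fin 4) = 3) = False := by decide
    have h30 : ((3:Fin 4) = 0) = False := by decide
    have h31 : ((3:Fin 4) = 1) = False := by decide
    have h32 : ((3:Fin 4) = 2) = False := by decide
    simp only [h01, h02, h03, h10, h12, h13, h20, h21, h23, h30, h31, h32,
      if_true, if_false, eq_self_iff_true, mul_one, mul_zero, zero_mul, add_zero,
      zero_add, sub_zero, neg_zero, mul_neg, neg_neg]
    rw [hsym 1 0, hsym 2 0, hsym 3 0, hsym 2 1, hsym 3 1, hsym 3 2]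
    ring
  rw [key]
  simp
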